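/- For γ > 0 and r > 0, the function b(r) = Σ_{j=0}^∞ 2^{-jγ} r/(r + 2^j) satisfies b(r)/r − (1/2) b'(r) ≥ c (1 + r)^{-1-γ} for some constant c > 0 depending only on γ. -/

import Mathlib

open Real

lemma exists_pow_two_bound (x : ℝ) (hx : 1 ≤ x) :
    ∃ n : ℕ, x ≤ 2 ^ n ∧ (2 : ℝ) ^ n ≤ 2 * x := by
  refine ⟨⌈Real.logb 2 x⌉₊, ?_, ?_⟩
  · have h1 : Real.logb 2 x ≤ (⌈Real.logb 2 x⌉₊ : ℝ) := Nat.le_ceil _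
    have := Real.rpow_le_rpow_of_exponent_le (by norm_num : (1:ℝ) ≤ 2) h1
    rwa [Real.rpow_logb (by norm_num) (by norm_num) (by linarith), Real.rpow_natCast] at this
  · have hnn : 0 ≤ Real.logb 2 x := Real.logb_nonneg (by norm_num) hx
    have h1 : (⌈Real.logb 2 x⌉₊ : ℝ) ≤ Real.logb 2 x + 1 := (Nat.ceil_lt_add_one hnn).le
    have := Real.rpow_le_rpow_of_exponent_le (by norm_num : (1:ℝ) ≤ 2) h1
    rwa [Real.rpow_add (by norm_num), Real.rpow_logb (by norm_num) (by norm_num) (by linarith),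
      Real.rpow_one, Real.rpow_natCast, mul_comm] at this

/-- For `γ > 0` and `r > 0`, with `b(r) = ∑_{j=0}^∞ 2^{-jγ} r/(r + 2^j)` and
`b'(r) = ∑_{j=0}^∞ 2^{-jγ} 2^j/(r + 2^j)^2`, one has
`b(r)/r − (1/2) b'(r) ≥ c (1 + r)^{-1-γ}` for some `c > 0` depending only on `γ`. -/
theorem stmt_2 (γ : ℝ) (hγ : 0 < γ) :
    ∃ c : ℝ, 0 < c ∧ ∀ r : ℝ, 0 < r →
      c * (1 + r) ^ (-(1 + γ)) ≤
        (∑' j : ℕ, (2 : ℝ) ^ (-(j : ℝ) * γ) * (r / (r + 2 ^ j))) / r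
          - (1 / 2) * ∑' j : ℕ, (2 : ℝ) ^ (-(j : ℝ) * γ) * (2 ^ j / (r + 2 ^ j) ^ 2) := by
  refine ⟨(2 : ℝ) ^ (-γ) / 6, by positivity, ?_⟩
  intro r hr
  have hr1 : (0:ℝ) < 1 + r := by linarith
  -- basic facts
  have hA : ∀ j : ℕ, (2 : ℝ) ^ (-(j : ℝ) * γ) = ((2:ℝ) ^ j) ^ (-γ) := by
    intro j
    rw [← Real.rpow_natCast 2 j, ← Real.rpow_mul (by norm_num)]
    ring_nf
  have hApos : ∀ j : ℕ, (0:ℝ) < (2 : ℝ) ^ (-(j : ℝ) * γ) := fun j => Real.rpow_pos_of_pos (by norm_num) _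
  have hDpos : ∀ j : ℕ, (0:ℝ) < r + 2 ^ j := fun j => by positivity
  have hAle : ∀ j : ℕ, (2 : ℝ) ^ (-(j : ℝ) * γ) ≤ ((2:ℝ) ^ (-γ)) ^ j := by
    intro j
    rw [hA j, ← Real.rpow_natCast ((2:ℝ) ^ (-γ)) j, ← Real.rpow_natCast 2 j,
      ← Real.rpow_mul (by norm_num), ← Real.rpow_mul (by norm_num), mul_comm]
  have hgeo : Summable (fun j : ℕ => ((2:ℝ) ^ (-γ)) ^ j) :=
    summable_geometric_of_lt_one (by positivity)
      (Real.rpow_lt_one_of_one_lt_of_neg (by norm_num) (by linarith))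
  -- summability of both series
  have hsf : Summable (fun j : ℕ => (2 : ℝ) ^ (-(j : ℝ) * γ) * (r / (r + 2 ^ j))) := by
    apply Summable.of_nonneg_of_le (fun j => by positivity) (fun j => ?_) hgeo
    have h1 : r / (r + 2 ^ j) ≤ 1 := by
      rw [div_le_one (hDpos j)]
      have := pow_pos (by norm_num : (0:ℝ) < 2) j
      linarith
    calc (2 : ℝ) ^ (-(j : ℝ) * γ) * (r / (r + 2 ^ j)) ≤ (2 : ℝ) ^ (-(j : ℝ) * γ) * 1 := by
          exact mul_le_mul_of_nonneg_left h1 (hApos j).le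
      _ ≤ ((2:ℝ) ^ (-γ)) ^ j := by rw [mul_one]; exact hAle j
  have hsg : Summable (fun j : ℕ => (2 : ℝ) ^ (-(j : ℝ) * γ) * ((2:ℝ) ^ j / (r + 2 ^ j) ^ 2)) := by
    apply Summable.of_nonneg_of_le (fun j => by positivity) (fun j => ?_) hgeo
    have h1 : (2:ℝ) ^ j / (r + 2 ^ j) ^ 2 ≤ 1 := by
      rw [div_le_one (by positivity)]
      have h2 : (1:ℝ) ≤ 2 ^ j := one_le_pow₀ (by norm_num)
      nlinarith [sq_nonneg r, pow_pos (by norm_num : (0:ℝ) < 2) j]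
    calc (2 : ℝ) ^ (-(j : ℝ) * γ) * ((2:ℝ) ^ j / (r + 2 ^ j) ^ 2)
        ≤ (2 : ℝ) ^ (-(j : ℝ) * γ) * 1 := mul_le_mul_of_nonneg_left h1 (hApos j).le
      _ ≤ ((2:ℝ) ^ (-γ)) ^ j := by rw [mul_one]; exact hAle j
  -- rewrite difference as a single tsum
  have hsf' : Summable (fun j : ℕ => (2 : ℝ) ^ (-(j : ℝ) * γ) * (r / (r + 2 ^ j)) / r) :=
    hsf.div_const r
  have hsg' : Summable (fun j : ℕ => (1/2) * ((2 : ℝ) ^ (-(j : ℝ) * γ) * ((2:ℝ) ^ j / (r + 2 ^ j) ^ 2))) :=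
    hsg.mul_left _
  have hsh : Summable (fun j : ℕ =>
      (2 : ℝ) ^ (-(j : ℝ) * γ) * (r / (r + 2 ^ j)) / r
        - (1/2) * ((2 : ℝ) ^ (-(j : ℝ) * γ) * ((2:ℝ) ^ j / (r + 2 ^ j) ^ 2))) := hsf'.sub hsg'
  have key : (∑' j : ℕ, (2 : ℝ) ^ (-(j : ℝ) * γ) * (r / (r + 2 ^ j))) / r
      - (1 / 2) * ∑' j : ℕ, (2 : ℝ) ^ (-(j : ℝ) * γ) * (2 ^ j / (r + 2 ^ j) ^ 2)
      = ∑' j : ℕ, ((2 : ℝ) ^ (-(j : ℝ) * γ) * (r / (r + 2 ^ j)) / r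
        - (1/2) * ((2 : ℝ) ^ (-(j : ℝ) * γ) * ((2:ℝ) ^ j / (r + 2 ^ j) ^ 2))) := by
    rw [← tsum_div_const, ← tsum_mul_left]
    exact (Summable.tsum_sub hsf' hsg').symm
  rw [key]
  -- each term is bounded below by (1/2) 2^{-jγ}/(r+2^j)
  have hterm : ∀ j : ℕ, (1/2) * ((2 : ℝ) ^ (-(j : ℝ) * γ) / (r + 2 ^ j))
      ≤ (2 : ℝ) ^ (-(j : ℝ) * γ) * (r / (r + 2 ^ j)) / r
        - (1/2) * ((2 : ℝ) ^ (-(j : ℝ) * γ) * ((2:ℝ) ^ j / (r + 2 ^ j) ^ 2)) := by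
    intro j
    have hD := hDpos j
    have hAj := hApos j
    have hPj : (0:ℝ) < (2:ℝ) ^ j := by positivity
    have e1 : (2 : ℝ) ^ (-(j : ℝ) * γ) * (r / (r + 2 ^ j)) / r
        = (2 : ℝ) ^ (-(j : ℝ) * γ) / (r + 2 ^ j) := by
      field_simp
    rw [e1]
    have h2 : (2 : ℝ) ^ (-(j : ℝ) * γ) * ((2:ℝ) ^ j / (r + 2 ^ j) ^ 2)
        ≤ (2 : ℝ) ^ (-(j : ℝ) * γ) / (r + 2 ^ j) := by
      rw [mul_div_assoc', div_le_div_iff₀ (by positivity) hD]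
      have h3 : (2:ℝ) ^ j ≤ r + 2 ^ j := by linarith
      nlinarith [mul_le_mul_of_nonneg_left (mul_le_mul_of_nonneg_right h3 hD.le) hAj.le]
    linarith
  -- choose the right index
  obtain ⟨n, hn1, hn2⟩ := exists_pow_two_bound (1 + r) (by linarith)
  have hnonneg : ∀ j : ℕ, 0 ≤ (2 : ℝ) ^ (-(j : ℝ) * γ) * (r / (r + 2 ^ j)) / r
        - (1/2) * ((2 : ℝ) ^ (-(j : ℝ) * γ) * ((2:ℝ) ^ j / (r + 2 ^ j) ^ 2)) := by
    intro j
    refine le_trans ?_ (hterm j)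
    positivity
  have hle := Summable.le_tsum hsh n (fun j _ => hnonneg j)
  refine le_trans (le_trans ?_ (hterm n)) hle
  -- now the concrete bound at index n
  have hAn : ((2:ℝ)) ^ (-γ) * (1 + r) ^ (-γ) ≤ (2 : ℝ) ^ (-(n : ℝ) * γ) := by
    rw [hA n, ← Real.mul_rpow (by norm_num) hr1.le]
    rw [Real.rpow_neg (by positivity), Real.rpow_neg (by positivity)]
    apply inv_anti₀ (Real.rpow_pos_of_pos (by positivity) _)
    exact Real.rpow_le_rpow (by positivity) hn2 hγ.le
  have hDn : r + (2:ℝ) ^ n ≤ 3 * (1 + r) := by linarith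
  have hrpow : (1 + r) ^ (-(1 + γ)) = (1 + r) ^ (-γ) / (1 + r) := by
    rw [show -(1 + γ) = -γ + (-1) by ring, Real.rpow_add hr1, Real.rpow_neg_one, div_eq_mul_inv]
  rw [hrpow]
  calc (2:ℝ) ^ (-γ) / 6 * ((1 + r) ^ (-γ) / (1 + r))
      = ((2:ℝ) ^ (-γ) * (1 + r) ^ (-γ)) / (6 * (1 + r)) := by
        rw [div_mul_div_comm]
    _ ≤ (2 : ℝ) ^ (-(n : ℝ) * γ) / (2 * (r + 2 ^ n)) := by
        apply div_le_div₀ (hApos n).le hAn (by positivity) (by linarith)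
    _ = 1 / 2 * ((2 : ℝ) ^ (-(n : ℝ) * γ) / (r + 2 ^ n)) := by
        rw [div_mul_eq_mul_div, one_mul, div_div, mul_comm (r + 2 ^ n) 2]
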